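/- Let k > 0, μ ∈ (0,1), and m ∈ ℕ with m ≥ 1. Then the m-th moment of the PGN(μ,k) distribution ν exists (the function x ↦ |x|^m is ν-integrable) and ∫ x^m dν(x) = 2^{m/2} · (Γ((k+m)/2)/Γ(k/2)) · ∫_0^1 cos(πu)^m · f_U(u) du, where f_U is the density of the Beta(2μ, 2(1−μ)) distribution. -/

import Mathlib

open MeasureTheory Real Set

/-- Density of the chi-squared distribution with `k` degrees of freedom. -/
noncomputable def chiSqDensity (k : ℝ) (v : ℝ) : ℝ :=
  if 0 < v then v ^ (k / 2 - 1) * Real.exp (-v / 2) / ((2 : ℝ) ^ (k / 2) * Real.Gamma (k / 2))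
  else 0

/-- The Beta function `B(a,b) = Γ(a)Γ(b)/Γ(a+b)`. -/
noncomputable def realBeta (a b : ℝ) : ℝ := Real.Gamma a * Real.Gamma b / Real.Gamma (a + b)

/-- Density of the Beta(2μ, 2(1-μ)) distribution. -/
noncomputable def betaDensity (μ : ℝ) (u : ℝ) : ℝ :=
  if 0 < u ∧ u < 1 then
    u ^ (2 * μ - 1) * (1 - u) ^ (1 - 2 * μ) / realBeta (2 * μ) (2 * (1 - μ))
  else 0

/-- The chi-squared distribution with `k` degrees of freedom, as a measure on ℝ. -/
noncomputable def chiSqMeasure (k : ℝ) : Measure ℝ :=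
  volume.withDensity (fun v => ENNReal.ofReal (chiSqDensity k v))

/-- The Beta(2μ, 2(1-μ)) distribution, as a measure on ℝ. -/
noncomputable def betaMeasure (μ : ℝ) : Measure ℝ :=
  volume.withDensity (fun u => ENNReal.ofReal (betaDensity μ u))

/-- The polar-generalized normal distribution PGN(μ, k): the pushforward of
(chi-squared k) ⊗ (Beta(2μ, 2(1-μ))) under `(v, u) ↦ √v · cos (π u)`. -/
noncomputable def PGN (μ k : ℝ) : Measure ℝ :=
  Measure.map (fun p : ℝ × ℝ => Real.sqrt p.1 * Real.cos (π * p.2))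
    ((chiSqMeasure k).prod (betaMeasure μ))

open scoped ENNReal NNReal

-- beta kernel integrability
lemma integrableOn_beta_kernel {a b : ℝ} (ha : -1 < a) (hb : -1 < b) :
    IntegrableOn (fun u : ℝ => u ^ a * (1 - u) ^ b) (Set.Ioo 0 1) := by
  have hmeas : ∀ s : Set ℝ, AEStronglyMeasurable (fun u : ℝ => u ^ a * (1 - u) ^ b)
      (volume.restrict s) := fun s => by
    apply Measurable.aestronglyMeasurable
    exact (measurable_id.pow measurable_const).mul
      ((measurable_const.sub measurable_id).pow measurable_const)
  have h1 : IntegrableOn (fun u : ℝ => u ^ a * (1 - u) ^ b) (Set.Ioc 0 (1/2)) := by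
    have base : IntegrableOn (fun u : ℝ => u ^ a) (Set.Ioc 0 (1/2)) := by
      have := intervalIntegral.intervalIntegrable_rpow' (a := 0) (b := 1/2) ha
      rwa [intervalIntegrable_iff_integrableOn_Ioc_of_le (by norm_num)] at this
    set C : ℝ := max ((1/2 : ℝ) ^ b) 1 with hC
    refine ((base.const_mul C).mono' (hmeas _) ?_)
    filter_upwards [self_mem_ae_restrict (measurableSet_Ioc : MeasurableSet (Set.Ioc (0:ℝ) (1/2)))]
      with u hu
    obtain ⟨hu0, hu1⟩ := hu
    have h1u : (1:ℝ)/2 ≤ 1 - u := by linarith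
    have h1u' : 1 - u ≤ 1 := by linarith
    have hbound : (1 - u) ^ b ≤ C := by
      rcases le_or_gt 0 b with hb0 | hb0
      · exact le_trans (Real.rpow_le_one (by linarith) h1u' hb0) (le_max_right _ _)
      · exact le_trans (Real.rpow_le_rpow_of_nonpos (by norm_num) h1u hb0.le) (le_max_left _ _)
    have hnn : 0 ≤ u ^ a * (1 - u) ^ b := by positivity
    rw [Real.norm_eq_abs, abs_of_nonneg hnn, mul_comm C]
    exact mul_le_mul_of_nonneg_left hbound (Real.rpow_nonneg hu0.le a)
  have h2 : IntegrableOn (fun u : ℝ => u ^ a * (1 - u) ^ b) (Set.Ioc (1/2) 1) := by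
    have base : IntegrableOn (fun u : ℝ => (1 - u) ^ b) (Set.Ioc (1/2) 1) := by
      have h0 : IntervalIntegrable (fun u : ℝ => u ^ b) volume 0 (1/2) :=
        intervalIntegral.intervalIntegrable_rpow' hb
      have h1 := (h0.comp_sub_left 1).symm
      norm_num at h1
      rwa [intervalIntegrable_iff_integrableOn_Ioc_of_le (by norm_num)] at h1
    set C : ℝ := max ((1/2 : ℝ) ^ a) 1 with hC
    refine ((base.const_mul C).mono' (hmeas _) ?_)
    filter_upwards [self_mem_ae_restrict (measurableSet_Ioc : MeasurableSet (Set.Ioc (1/2:ℝ) 1))]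
      with u hu
    obtain ⟨hu0, hu1⟩ := hu
    have hbound : u ^ a ≤ C := by
      rcases le_or_gt 0 a with ha0 | ha0
      · exact le_trans (Real.rpow_le_one (by linarith) hu1 ha0) (le_max_right _ _)
      · exact le_trans (Real.rpow_le_rpow_of_nonpos (by norm_num) hu0.le ha0.le) (le_max_left _ _)
    have hnn : 0 ≤ u ^ a * (1 - u) ^ b := by
      have : (0:ℝ) < u := by linarith
      have : (0:ℝ) ≤ 1 - u := by linarith
      positivity
    rw [Real.norm_eq_abs, abs_of_nonneg hnn]
    exact mul_le_mul_of_nonneg_right hbound (Real.rpow_nonneg (by linarith) b)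
  have : Set.Ioo (0:ℝ) 1 ⊆ Set.Ioc 0 (1/2) ∪ Set.Ioc (1/2) 1 := by
    intro x hx
    rcases le_or_gt x (1/2) with h | h
    · exact Or.inl ⟨hx.1, h⟩
    · exact Or.inr ⟨h, hx.2.le⟩
  exact (h1.union h2).mono_set this

lemma integrableOn_chi_kernel {s : ℝ} (hs : -1 < s) :
    IntegrableOn (fun v : ℝ => v ^ s * Real.exp (-((1/2:ℝ) * v))) (Set.Ioi 0) := by
  have := integrableOn_rpow_mul_exp_neg_mul_rpow hs zero_lt_one (show (0:ℝ) < 1/2 by norm_num)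
  refine this.congr_fun (fun x hx => ?_) measurableSet_Ioi
  beta_reduce
  rw [Real.rpow_one, neg_mul]

lemma chiSqDensity_nonneg {k : ℝ} (hk : 0 < k) (v : ℝ) : 0 ≤ chiSqDensity k v := by
  unfold chiSqDensity
  split_ifs with h
  · have h1 : 0 < Real.Gamma (k / 2) := Real.Gamma_pos_of_pos (by linarith)
    positivity
  · exact le_refl _

lemma chiSqDensity_measurable (k : ℝ) : Measurable (chiSqDensity k) := by
  unfold chiSqDensity
  refine Measurable.ite ?_ ?_ measurable_const
  · exact measurableSet_Ioi
  · exact ((measurable_id.pow measurable_const).mul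
      ((measurable_id.neg.div_const 2).exp)).div_const _

lemma betaDensity_measurable (μ : ℝ) : Measurable (betaDensity μ) := by
  unfold betaDensity
  refine Measurable.ite ?_ ?_ measurable_const
  · exact (measurableSet_Ioi.inter measurableSet_Iio :
      MeasurableSet ((Set.Ioi 0) ∩ (Set.Iio 1) : Set ℝ))
  · exact ((measurable_id.pow measurable_const).mul
      ((measurable_const.sub measurable_id).pow measurable_const)).div_const _

lemma realBeta_pos {μ : ℝ} (hμ : μ ∈ Set.Ioo (0:ℝ) 1) : 0 < realBeta (2*μ) (2*(1-μ)) := by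
  unfold realBeta
  have h2 : 2*μ + 2*(1-μ) = 2 := by ring
  rw [h2]
  have := Real.Gamma_pos_of_pos (show (0:ℝ) < 2*μ by nlinarith [hμ.1])
  have := Real.Gamma_pos_of_pos (show (0:ℝ) < 2*(1-μ) by nlinarith [hμ.2])
  have := Real.Gamma_pos_of_pos (show (0:ℝ) < 2 by norm_num)
  positivity

lemma betaDensity_nonneg {μ : ℝ} (hμ : μ ∈ Set.Ioo (0:ℝ) 1) (u : ℝ) : 0 ≤ betaDensity μ u := by
  unfold betaDensity
  split_ifs with h
  · have := realBeta_pos hμ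
    have h1 : (0:ℝ) ≤ 1 - u := by linarith [h.2]
    have h0 : (0:ℝ) ≤ u := h.1.le
    positivity
  · exact le_refl _

lemma betaDensity_integrable {μ : ℝ} (hμ : μ ∈ Set.Ioo (0:ℝ) 1) :
    Integrable (betaDensity μ) := by
  have : betaDensity μ = Set.indicator (Set.Ioo 0 1)
      (fun u => u ^ (2*μ-1) * (1-u) ^ (1-2*μ) / realBeta (2*μ) (2*(1-μ))) := by
    funext u
    unfold betaDensity
    by_cases h : 0 < u ∧ u < 1
    · rw [if_pos h, Set.indicator_of_mem (Set.mem_Ioo.mpr h)]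
    · rw [if_neg h, Set.indicator_of_notMem (fun hc => h (Set.mem_Ioo.mp hc))]
  rw [this, integrable_indicator_iff measurableSet_Ioo]
  exact (integrableOn_beta_kernel (by linarith [hμ.1]) (by linarith [hμ.2])).div_const _

-- withDensity helpers
lemma integral_withDensity_ofReal {d : ℝ → ℝ} (hd : Measurable d) (hd0 : ∀ x, 0 ≤ d x)
    (g : ℝ → ℝ) :
    ∫ x, g x ∂(volume.withDensity fun x => ENNReal.ofReal (d x)) = ∫ x, g x * d x := by
  have h1 : (fun x => ENNReal.ofReal (d x)) = fun x => ((d x).toNNReal : ℝ≥0∞) := rfl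
  rw [h1, integral_withDensity_eq_integral_smul hd.real_toNNReal g]
  congr 1
  funext x
  simp [NNReal.smul_def, Real.coe_toNNReal _ (hd0 x), mul_comm]

lemma integrable_withDensity_ofReal {d : ℝ → ℝ} (hd : Measurable d) (hd0 : ∀ x, 0 ≤ d x)
    {g : ℝ → ℝ} :
    Integrable g (volume.withDensity fun x => ENNReal.ofReal (d x)) ↔
      Integrable (fun x => g x * d x) volume := by
  rw [integrable_withDensity_iff hd.ennreal_ofReal
    (Filter.Eventually.of_forall fun x => ENNReal.ofReal_lt_top)]
  exact integrable_congr (Filter.Eventually.of_forall fun x => by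
    simp only [ENNReal.toReal_ofReal (hd0 x)])

lemma chi_indicator_eq {k : ℝ} (hk : 0 < k) (m : ℕ) :
    (fun v : ℝ => Real.sqrt v ^ m * chiSqDensity k v) =
      Set.indicator (Set.Ioi 0) (fun v =>
        v ^ ((k + m)/2 - 1) * Real.exp (-((1/2:ℝ) * v)) /
          ((2:ℝ) ^ (k/2) * Real.Gamma (k/2))) := by
  funext v
  by_cases hv : 0 < v
  · rw [Set.indicator_of_mem (Set.mem_Ioi.mpr hv)]
    unfold chiSqDensity
    rw [if_pos hv]
    have h1 : Real.sqrt v ^ m = v ^ ((m:ℝ)/2) := by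
      rw [Real.sqrt_eq_rpow, ← Real.rpow_natCast (v ^ ((1:ℝ)/2)) m, ← Real.rpow_mul hv.le]
      congr 1
      ring
    have h3 : -v/2 = -((1/2:ℝ)*v) := by ring
    rw [h1, h3, ← mul_div_assoc, ← mul_assoc, ← Real.rpow_add hv]
    have h2 : (m:ℝ)/2 + (k/2 - 1) = (k + m)/2 - 1 := by ring
    rw [h2]
  · rw [Set.indicator_of_notMem (by simpa using hv)]
    unfold chiSqDensity
    rw [if_neg hv, mul_zero]

lemma chi_exp_pos {k : ℝ} (hk : 0 < k) (m : ℕ) : (0:ℝ) < (k + m)/2 := by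
  have : (0:ℝ) ≤ (m:ℝ) := Nat.cast_nonneg m
  linarith

lemma chi_integrable {k : ℝ} (hk : 0 < k) (m : ℕ) :
    Integrable (fun v => Real.sqrt v ^ m * chiSqDensity k v) := by
  rw [chi_indicator_eq hk m, integrable_indicator_iff measurableSet_Ioi]
  exact (integrableOn_chi_kernel (by linarith [chi_exp_pos hk m])).div_const _

lemma chi_integral {k : ℝ} (hk : 0 < k) (m : ℕ) :
    ∫ v, Real.sqrt v ^ m * chiSqDensity k v =
      2 ^ ((m:ℝ)/2) * (Real.Gamma ((k + m)/2) / Real.Gamma (k/2)) := by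
  rw [chi_indicator_eq hk m, integral_indicator measurableSet_Ioi, integral_div,
    Real.integral_rpow_mul_exp_neg_mul_Ioi (chi_exp_pos hk m) (show (0:ℝ) < 1/2 by norm_num)]
  rw [show (1:ℝ)/(1/2) = 2 by norm_num]
  have hsplit : (2:ℝ) ^ ((k + (m:ℝ))/2) = 2 ^ (k/2) * 2 ^ ((m:ℝ)/2) := by
    rw [← Real.rpow_add two_pos]
    congr 1
    ring
  have hΓ : Real.Gamma (k/2) ≠ 0 := (Real.Gamma_pos_of_pos (by linarith)).ne'
  have h2 : ((2:ℝ) ^ (k/2)) ≠ 0 := (Real.rpow_pos_of_pos two_pos _).ne'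
  rw [hsplit]
  field_simp

theorem stmt14 (k μ : ℝ) (hk : 0 < k) (hμ : μ ∈ Set.Ioo (0:ℝ) 1) (m : ℕ) (hm : 1 ≤ m) :
    Integrable (fun x : ℝ => |x| ^ m) (PGN μ k) ∧
    (∫ x, x ^ m ∂(PGN μ k)) =
      (2 : ℝ) ^ ((m : ℝ) / 2) * (Real.Gamma ((k + m) / 2) / Real.Gamma (k / 2)) *
        ∫ u in (0 : ℝ)..1, Real.cos (π * u) ^ m * betaDensity μ u := by
  have hdχ := chiSqDensity_measurable k
  have hdβ := betaDensity_measurable μ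
  have hf : Measurable (fun p : ℝ × ℝ => Real.sqrt p.1 * Real.cos (π * p.2)) :=
    measurable_fst.sqrt.mul ((measurable_const.mul measurable_snd).cos)
  haveI : SFinite (chiSqMeasure k) := by unfold chiSqMeasure; infer_instance
  haveI : SFinite (betaMeasure μ) := by unfold betaMeasure; infer_instance
  have Hg : Integrable (fun v => Real.sqrt v ^ m) (chiSqMeasure k) := by
    rw [chiSqMeasure, integrable_withDensity_ofReal hdχ (chiSqDensity_nonneg hk)]
    exact chi_integrable hk m
  have Hh2 : Integrable (fun u => |Real.cos (π * u)| ^ m) (betaMeasure μ) := by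
    rw [betaMeasure, integrable_withDensity_ofReal hdβ (betaDensity_nonneg hμ)]
    refine (betaDensity_integrable hμ).mono' ?_
      (Filter.Eventually.of_forall fun u => ?_)
    · exact (((measurable_const.mul measurable_id).cos.abs.pow_const m).mul
        hdβ).aestronglyMeasurable
    · have h1 : |Real.cos (π * u)| ^ m ≤ 1 :=
        pow_le_one₀ (abs_nonneg _) (Real.abs_cos_le_one _)
      have h2 : 0 ≤ betaDensity μ u := betaDensity_nonneg hμ u
      have h3 : 0 ≤ |Real.cos (π * u)| ^ m := pow_nonneg (abs_nonneg _) m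
      rw [Real.norm_eq_abs, abs_of_nonneg (mul_nonneg h3 h2)]
      calc |Real.cos (π * u)| ^ m * betaDensity μ u ≤ 1 * betaDensity μ u :=
            mul_le_mul_of_nonneg_right h1 h2
        _ = betaDensity μ u := one_mul _
  have Hh1 : Integrable (fun u => Real.cos (π * u) ^ m) (betaMeasure μ) := by
    rw [betaMeasure, integrable_withDensity_ofReal hdβ (betaDensity_nonneg hμ)]
    refine (betaDensity_integrable hμ).mono' ?_
      (Filter.Eventually.of_forall fun u => ?_)
    · exact (((measurable_const.mul measurable_id).cos.pow_const m).mul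
        hdβ).aestronglyMeasurable
    · have h1 : |Real.cos (π * u)| ^ m ≤ 1 :=
        pow_le_one₀ (abs_nonneg _) (Real.abs_cos_le_one _)
      have h2 : 0 ≤ betaDensity μ u := betaDensity_nonneg hμ u
      rw [Real.norm_eq_abs, abs_mul, abs_pow, abs_of_nonneg h2]
      calc |Real.cos (π * u)| ^ m * betaDensity μ u ≤ 1 * betaDensity μ u :=
            mul_le_mul_of_nonneg_right h1 h2
        _ = betaDensity μ u := one_mul _
  constructor
  · rw [PGN, integrable_map_measure (g := fun x : ℝ => |x| ^ m) (continuous_abs.pow m).aestronglyMeasurable hf.aemeasurable]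
    have heq : ((fun x : ℝ => |x| ^ m) ∘ fun p : ℝ × ℝ => Real.sqrt p.1 * Real.cos (π * p.2)) =
        fun p : ℝ × ℝ => Real.sqrt p.1 ^ m * |Real.cos (π * p.2)| ^ m := by
      funext p
      simp only [Function.comp_apply, abs_mul, abs_of_nonneg (Real.sqrt_nonneg _), mul_pow]
    rw [heq]
    exact Hg.mul_prod Hh2
  · rw [PGN, integral_map hf.aemeasurable (continuous_pow m).aestronglyMeasurable]
    simp only [mul_pow]
    rw [integral_prod_mul (fun v => Real.sqrt v ^ m) (fun u => Real.cos (π * u) ^ m)]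
    have hGχ : ∫ v, Real.sqrt v ^ m ∂(chiSqMeasure k) =
        2 ^ ((m:ℝ)/2) * (Real.Gamma ((k + m)/2) / Real.Gamma (k/2)) := by
      rw [chiSqMeasure, integral_withDensity_ofReal hdχ (chiSqDensity_nonneg hk)]
      exact chi_integral hk m
    have hGβ : ∫ u, Real.cos (π * u) ^ m ∂(betaMeasure μ) =
        ∫ u in (0:ℝ)..1, Real.cos (π * u) ^ m * betaDensity μ u := by
      rw [betaMeasure, integral_withDensity_ofReal hdβ (betaDensity_nonneg hμ)]
      rw [intervalIntegral.integral_of_le zero_le_one]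
      have hind : (fun u : ℝ => Real.cos (π * u) ^ m * betaDensity μ u) =
          Set.indicator (Set.Ioc 0 1) (fun u => Real.cos (π * u) ^ m * betaDensity μ u) := by
        funext u
        by_cases h : u ∈ Set.Ioc (0:ℝ) 1
        · rw [Set.indicator_of_mem h]
        · rw [Set.indicator_of_notMem h]
          have hz : betaDensity μ u = 0 := by
            unfold betaDensity
            rw [if_neg]
            rintro ⟨h1, h2⟩
            exact h ⟨h1, h2.le⟩
          rw [hz, mul_zero]
      conv_lhs => rw [hind]
      rw [integral_indicator measurableSet_Ioc]
    rw [hGχ, hGβ]
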